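/- arXiv:2410.07090 — 3 statements merged into one kernel-verified Lean document; each statement's English description precedes it below -/
import Mathlib

section
/- Let g : D² → ℂ be continuous on the closed unit disc, holomorphic on the open disc, with |g(z)| = 1 for all z ∈ ∂D², and suppose the winding number of g restricted to ∂D² around the origin is 0. Then g is constant (equal to some z₀ with |z₀| = 1). -/
open Metric Complex Topology Filter

lemma aux_ne (w z : ℂ) (hw : w ∈ ball (0:ℂ) 1) (hz : z ∈ closedBall (0:ℂ) 1) :
    1 - (starRingEnd ℂ) w * z ≠ 0 := by
  simp only [mem_ball, mem_closedBall, dist_zero_right] at hw hz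
  intro h
  have : ‖(starRingEnd ℂ) w * z‖ < 1 := by
    rw [norm_mul, Complex.norm_conj]
    calc ‖w‖ * ‖z‖ ≤ ‖w‖ * 1 :=
      mul_le_mul_of_nonneg_left hz (norm_nonneg w)
    _ < 1 := by simpa using hw
  have h1 : (starRingEnd ℂ) w * z = 1 := by linear_combination -h
  rw [h1] at this; simp at this

lemma aux_bd (w z : ℂ) (hz : z ∈ sphere (0:ℂ) 1) :
    ‖1 - (starRingEnd ℂ) w * z‖ = ‖z - w‖ := by
  simp only [mem_sphere_iff_norm, sub_zero] at hz ⊢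
  have hz1 : z * (starRingEnd ℂ) z = 1 := by
    rw [Complex.mul_conj, Complex.normSq_eq_norm_sq, hz]; norm_num
  have h2 : 1 - (starRingEnd ℂ) w * z = z * ((starRingEnd ℂ) (z - w)) := by
    rw [map_sub]; ring_nf; linear_combination -hz1
  rw [h2, norm_mul, hz, one_mul, Complex.norm_conj]

lemma const_of_nonvanishing (g : ℂ → ℂ)
    (hcont : ContinuousOn g (closedBall (0 : ℂ) 1))
    (hdiff : DifferentiableOn ℂ g (ball (0 : ℂ) 1))
    (hb : ∀ z ∈ sphere (0 : ℂ) 1, ‖g z‖ = 1)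
    (hnv : ∀ z ∈ ball (0:ℂ) 1, g z ≠ 0) :
    ∃ z₀ : ℂ, ‖z₀‖ = 1 ∧ ∀ z ∈ closedBall (0 : ℂ) 1, g z = z₀ := by
  have hcl : closure (ball (0:ℂ) 1) = closedBall 0 1 := closure_ball 0 one_ne_zero
  have hfr : frontier (ball (0:ℂ) 1) = sphere 0 1 := frontier_ball 0 one_ne_zero
  have hdc : DiffContOnCl ℂ g (ball 0 1) := ⟨hdiff, by rwa [hcl]⟩
  -- |g| ≤ 1 on closedBall
  have hle : ∀ z ∈ closedBall (0:ℂ) 1, ‖g z‖ ≤ 1 := by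
    intro z hz
    have := Complex.norm_le_of_forall_mem_frontier_norm_le isBounded_ball hdc
      (C := 1) (fun w hw => by rw [hfr] at hw; simp [hb w hw])
      (z := z) (by rwa [hcl])
    simpa using this
  have hnv' : ∀ z ∈ closedBall (0:ℂ) 1, g z ≠ 0 := by
    intro z hz
    rcases eq_or_lt_of_le (mem_closedBall.mp hz) with h | h
    · have hzs : z ∈ sphere (0:ℂ) 1 := by simpa [mem_sphere] using h
      intro h0; have := hb z hzs; rw [h0] at this; simp at this
    · exact hnv z (mem_ball.mpr h)
  -- |1/g| ≤ 1
  have hdc' : DiffContOnCl ℂ (fun z => (g z)⁻¹) (ball 0 1) := by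
    refine ⟨DifferentiableOn.inv hdiff hnv, ?_⟩
    rw [hcl]; exact ContinuousOn.inv₀ hcont hnv'
  have hge : ∀ z ∈ closedBall (0:ℂ) 1, ‖(g z)⁻¹‖ ≤ 1 := by
    intro z hz
    have := Complex.norm_le_of_forall_mem_frontier_norm_le isBounded_ball hdc'
      (C := 1) (fun w hw => by
        rw [hfr] at hw; simp [map_inv₀, hb w hw])
      (z := z) (by rwa [hcl])
    simpa using this
  have habs : ∀ z ∈ closedBall (0:ℂ) 1, ‖g z‖ = 1 := by
    intro z hz
    have h1 := hle z hz
    have h2 := hge z hz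
    rw [norm_inv] at h2
    have h3 : 1 ≤ ‖g z‖ := by
      rcases eq_or_ne (g z) 0 with h | h
      · exact absurd h (hnv' z hz)
      · have : ‖g z‖ ≠ 0 := by simpa using h
        rw [inv_le_one_iff₀] at h2
        rcases h2 with h2 | h2
        · exact absurd (le_antisymm h2 (norm_nonneg _)) this
        · exact h2
    linarith
  -- max modulus: constant
  have hmax : IsMaxOn (norm ∘ g) (ball (0:ℂ) 1) 0 := by
    intro z hz
    simp only [Function.comp, Set.mem_setOf_eq]
    rw [habs z (ball_subset_closedBall hz), habs 0 (by simp)]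
  have := Complex.eqOn_closure_of_isPreconnected_of_isMaxOn_norm
    (convex_ball (0:ℂ) 1).isPreconnected isOpen_ball hdc (by simp) hmax
  rw [hcl] at this
  exact ⟨g 0, habs 0 (by simp), fun z hz => this hz⟩

lemma not_ball_zero (g : ℂ → ℂ)
    (hcont : ContinuousOn g (closedBall (0 : ℂ) 1))
    (hb : ∀ z ∈ sphere (0 : ℂ) 1, ‖g z‖ = 1)
    (h0 : ∀ z ∈ ball (0:ℂ) 1, g z = 0) : False := by
  have h1 : (1:ℂ) ∈ sphere (0:ℂ) 1 := by simp
  have hc : ContinuousWithinAt g (closedBall (0:ℂ) 1) 1 :=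
    hcont 1 (by simp)
  -- sequence (1 - 1/(n+2)) → 1 within closedBall
  have hseqR : Filter.Tendsto (fun n : ℕ => (1 - 1/(n+2) : ℝ)) Filter.atTop (𝓝 1) := by
    have h0 : Filter.Tendsto (fun n : ℕ => (1/(n+2) : ℝ)) Filter.atTop (𝓝 0) := by
      have := (tendsto_one_div_add_atTop_nhds_zero_nat :
        Filter.Tendsto (fun n : ℕ => 1 / ((n:ℝ) + 1)) Filter.atTop (𝓝 0)).comp (Filter.tendsto_add_atTop_nat 1)
      apply this.congr
      intro n; simp [Function.comp]; push_cast; ring_nf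
    have h := Filter.Tendsto.const_sub (1:ℝ) h0
    simpa using h
  have hseq : Filter.Tendsto (fun n : ℕ => ((1 - 1/(n+2) : ℝ) : ℂ)) Filter.atTop (𝓝 1) := by
    have h2 := (Complex.continuous_ofReal.tendsto 1).comp hseqR
    simpa [Function.comp_def] using h2
  have hmem : ∀ n : ℕ, ((1 - 1/(n+2) : ℝ) : ℂ) ∈ ball (0:ℂ) 1 := by
    intro n
    simp only [mem_ball, dist_zero_right, Complex.norm_real, Real.norm_eq_abs]
    have hpos : (0:ℝ) < 1/((n:ℝ)+2) := by positivity
    have hle1 : 1/((n:ℝ)+2) ≤ 1 := by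
      rw [div_le_one (by positivity)]
      have := Nat.cast_nonneg (α := ℝ) n; linarith
    rw [_root_.abs_of_nonneg (by linarith)]
    linarith
  have htend : Filter.Tendsto (fun n : ℕ => g ((1 - 1/(n+2) : ℝ) : ℂ)) Filter.atTop (𝓝 (g 1)) := by
    apply (hc.tendsto).comp
    apply tendsto_nhdsWithin_of_tendsto_nhds_of_eventually_within _ hseq
    exact Filter.Eventually.of_forall (fun n => ball_subset_closedBall (hmem n))
  have h00 : Filter.Tendsto (fun _ : ℕ => (0:ℂ)) Filter.atTop (𝓝 (g 1)) :=
    htend.congr (fun n => h0 _ (hmem n))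
  have hg1 : g 1 = 0 := tendsto_nhds_unique h00 tendsto_const_nhds
  have := hb 1 h1; rw [hg1] at this; simp at this

lemma zeros_finite (g : ℂ → ℂ)
    (hcont : ContinuousOn g (closedBall (0 : ℂ) 1))
    (hdiff : DifferentiableOn ℂ g (ball (0 : ℂ) 1))
    (hb : ∀ z ∈ sphere (0 : ℂ) 1, ‖g z‖ = 1) :
    {z | z ∈ ball (0:ℂ) 1 ∧ g z = 0}.Finite := by
  by_contra hinf
  have hinf' : Set.Infinite {z | z ∈ ball (0:ℂ) 1 ∧ g z = 0} := hinf
  obtain ⟨x, hxK, hx⟩ := hinf'.exists_accPt_of_subset_isCompact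
    (isCompact_closedBall (0:ℂ) 1)
    (fun z hz => ball_subset_closedBall hz.1)
  -- x is a limit of zeros, so g x = 0 by continuity
  have hxcl : x ∈ closure {z | z ∈ ball (0:ℂ) 1 ∧ g z = 0} :=
    mem_closure_iff_clusterPt.mpr hx.clusterPt
  have hclosed : IsClosed {z | z ∈ closedBall (0:ℂ) 1 ∧ g z = 0} := by
    have he : {z | z ∈ closedBall (0:ℂ) 1 ∧ g z = 0} = closedBall 0 1 ∩ g ⁻¹' {0} := by
      ext z; simp [and_comm]
    rw [he]
    exact hcont.preimage_isClosed_of_isClosed Metric.isClosed_closedBall isClosed_singleton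
  have hgx : g x = 0 := by
    have hsub : {z | z ∈ ball (0:ℂ) 1 ∧ g z = 0} ⊆ {z | z ∈ closedBall (0:ℂ) 1 ∧ g z = 0} :=
      fun z hz => ⟨ball_subset_closedBall hz.1, hz.2⟩
    exact ((hclosed.closure_subset_iff.mpr hsub) hxcl).2
  have hxball : x ∈ ball (0:ℂ) 1 := by
    rcases eq_or_lt_of_le (mem_closedBall.mp hxK) with h | h
    · exfalso
      have : x ∈ sphere (0:ℂ) 1 := by simpa [mem_sphere] using h
      have := hb x this; rw [hgx] at this; simp at this
    · exact mem_ball.mpr h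
  -- identity theorem
  have gA : AnalyticOnNhd ℂ g (ball (0:ℂ) 1) := hdiff.analyticOnNhd isOpen_ball
  have hfreq : ∃ᶠ z in 𝓝[≠] x, g z = 0 := by
    rw [accPt_iff_frequently] at hx
    rw [frequently_nhdsWithin_iff]
    exact hx.mono (fun z hz => ⟨hz.2.2, Set.mem_compl_singleton_iff.mpr hz.1⟩)
  have := gA.eqOn_zero_of_preconnected_of_frequently_eq_zero
    (convex_ball (0:ℂ) 1).isPreconnected hxball hfreq
  exact not_ball_zero g hcont hb (fun z hz => this hz)

noncomputable def blift (w : ℂ) (θ : ℝ) : ℝ :=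
  θ - 2 * Complex.arg (1 - (starRingEnd ℂ) w * Complex.exp (θ * Complex.I))

lemma blift_re_pos (w : ℂ) (hw : w ∈ ball (0:ℂ) 1) (θ : ℝ) :
    0 < (1 - (starRingEnd ℂ) w * Complex.exp (θ * Complex.I)).re := by
  simp only [mem_ball, dist_zero_right] at hw
  have habs : ‖(starRingEnd ℂ) w * Complex.exp (θ * Complex.I)‖ < 1 := by
    rw [norm_mul, Complex.norm_conj, Complex.norm_exp_ofReal_mul_I, mul_one]; exact hw
  have hre : |((starRingEnd ℂ) w * Complex.exp (θ * Complex.I)).re| < 1 :=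
    lt_of_le_of_lt (Complex.abs_re_le_norm _) habs
  rw [Complex.sub_re, Complex.one_re]
  have := abs_lt.mp hre
  linarith [this.2]

lemma blift_continuous (w : ℂ) (hw : w ∈ ball (0:ℂ) 1) : Continuous (blift w) := by
  rw [continuous_iff_continuousAt]
  intro θ
  unfold blift
  apply ContinuousAt.sub continuousAt_id
  apply ContinuousAt.mul continuousAt_const
  have hc : Continuous (fun θ : ℝ => 1 - (starRingEnd ℂ) w * Complex.exp (θ * Complex.I)) :=
    continuous_const.sub (continuous_const.mul
      (Complex.continuous_exp.comp (Complex.continuous_ofReal.mul continuous_const)))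
  have h1 : ContinuousAt Complex.arg (1 - (starRingEnd ℂ) w * Complex.exp (θ * Complex.I)) :=
    Complex.continuousAt_arg (Or.inl (blift_re_pos w hw θ))
  exact ContinuousAt.comp (f := fun θ : ℝ => 1 - (starRingEnd ℂ) w * Complex.exp (θ * Complex.I))
    (x := θ) h1 hc.continuousAt

lemma blift_exp (w : ℂ) (hw : w ∈ ball (0:ℂ) 1) (θ : ℝ) :
    Complex.exp (blift w θ * Complex.I) =
      (Complex.exp (θ * Complex.I) - w) / (1 - (starRingEnd ℂ) w * Complex.exp (θ * Complex.I)) := by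
  set z := Complex.exp (θ * Complex.I) with hz
  set u := 1 - (starRingEnd ℂ) w * z with hu
  have hune : u ≠ 0 := by
    intro h
    have := blift_re_pos w hw θ
    rw [← hu, h] at this; simp at this
  have hz1 : z * (starRingEnd ℂ) z = 1 := by
    rw [Complex.mul_conj, Complex.normSq_eq_norm_sq, Complex.norm_exp_ofReal_mul_I]; norm_num
  have hcu : z * (starRingEnd ℂ) u = z - w := by
    rw [hu, map_sub, map_mul, map_one, Complex.conj_conj]
    have h2 := congrArg (starRingEnd ℂ) hz1
    rw [map_mul, map_one, Complex.conj_conj] at h2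
    linear_combination -w * h2
  have harg : Complex.exp (Complex.arg u * Complex.I) = u / ‖u‖ := by
    rw [eq_div_iff (by simpa using norm_ne_zero_iff.mpr hune)]
    rw [mul_comm]
    exact Complex.norm_mul_exp_arg_mul_I u
  have hmc : (‖u‖ : ℂ) * (‖u‖ : ℂ) = u * (starRingEnd ℂ) u := by
    rw [Complex.mul_conj]
    norm_cast
    rw [← Complex.sq_norm]; ring
  have habs_ne : (‖u‖ : ℂ) ≠ 0 := by simpa using norm_ne_zero_iff.mpr hune
  have hsplit : Complex.exp ((blift w θ : ℝ) * Complex.I) =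
      Complex.exp ((θ:ℝ) * Complex.I) * Complex.exp (-(Complex.arg u * Complex.I)) *
        Complex.exp (-(Complex.arg u * Complex.I)) := by
    rw [← Complex.exp_add, ← Complex.exp_add]
    congr 1
    unfold blift
    rw [← hz, ← hu]
    push_cast
    ring
  rw [hsplit, Complex.exp_neg, harg, ← hz, inv_div]
  have hre : z * (↑‖u‖ / u) * (↑‖u‖ / u) = z * (↑‖u‖ * ↑‖u‖) / u / u := by ring
  rw [hre, hmc, ← hcu]
  field_simp

lemma blift_period (w : ℂ) : blift w (2 * Real.pi) = blift w 0 + 2 * Real.pi := by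
  unfold blift
  have h1 : Complex.exp ((2 * Real.pi : ℝ) * Complex.I) = Complex.exp ((0:ℝ) * Complex.I) := by
    push_cast
    rw [Complex.exp_two_pi_mul_I]
    simp
  rw [h1]
  ring

/-- A continuous real function taking values in `ℤ` (as reals) is constant. -/
lemma int_valued_const (f : ℝ → ℝ) (hf : Continuous f) (h : ∀ t, ∃ n : ℤ, f t = n)
    (s t : ℝ) : f s = f t := by
  by_contra hne
  obtain ⟨n, hn⟩ := h s
  obtain ⟨m, hm⟩ := h t
  have hnm : n ≠ m := by
    rintro rfl; exact hne (hn.trans hm.symm)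
  set j : ℤ := min n m with hj
  have hv : (j:ℝ) + 1/2 ∈ Set.uIcc (f s) (f t) := by
    rw [Set.mem_uIcc, hn, hm]
    rcases le_total n m with hle | hle
    · left
      have h1 : j = n := min_eq_left hle
      have h2 : n + 1 ≤ m := by omega
      have h2' : (n:ℝ) + 1 ≤ (m:ℝ) := by exact_mod_cast h2
      rw [h1]
      constructor <;> push_cast <;> linarith
    · right
      have h1 : j = m := min_eq_right hle
      have h2 : m + 1 ≤ n := by omega
      have h2' : (m:ℝ) + 1 ≤ (n:ℝ) := by exact_mod_cast h2
      rw [h1]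
      constructor <;> push_cast <;> linarith
  obtain ⟨x, _, hx⟩ := intermediate_value_uIcc hf.continuousOn hv
  obtain ⟨k, hk⟩ := h x
  rw [hk] at hx
  have h12 : ((k - j : ℤ) : ℝ) = 1/2 := by push_cast; linarith
  rcases le_or_gt (k - j) 0 with hh | hh
  · have : ((k - j : ℤ) : ℝ) ≤ 0 := by exact_mod_cast hh
    linarith
  · have : (1:ℤ) ≤ k - j := hh
    have : (1:ℝ) ≤ ((k - j : ℤ) : ℝ) := by exact_mod_cast this
    linarith

lemma exp_eq_exp_real (x y : ℝ) (h : Complex.exp (x * Complex.I) = Complex.exp (y * Complex.I)) :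
    ∃ n : ℤ, x = y + n * (2 * Real.pi) := by
  rw [Complex.exp_eq_exp_iff_exists_int] at h
  obtain ⟨n, hn⟩ := h
  refine ⟨n, ?_⟩
  have h2 : (x : ℂ) * Complex.I = (y + n * (2 * Real.pi) : ℝ) * Complex.I := by
    rw [hn]; push_cast; ring
  have h3 : (x : ℂ) = ((y + n * (2 * Real.pi) : ℝ) : ℂ) :=
    mul_right_cancel₀ Complex.I_ne_zero h2
  exact_mod_cast h3

/-- Two continuous lifts of the same circle-valued function differ by a constant;
in particular the increments over `[0, 2π]` agree. -/
lemma lift_diff_const (p q : ℝ → ℝ) (hp : Continuous p) (hq : Continuous q)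
    (h : ∀ θ, Complex.exp (p θ * Complex.I) = Complex.exp (q θ * Complex.I)) :
    p (2 * Real.pi) - q (2 * Real.pi) = p 0 - q 0 := by
  have hpi : (0:ℝ) < 2 * Real.pi := by positivity
  have key : ∀ θ, ∃ n : ℤ, (p θ - q θ) / (2 * Real.pi) = n := by
    intro θ
    obtain ⟨n, hn⟩ := exp_eq_exp_real (p θ) (q θ) (h θ)
    exact ⟨n, by field_simp; rw [hn]; ring⟩
  have := int_valued_const (fun θ => (p θ - q θ) / (2 * Real.pi))
    (by continuity) key (2 * Real.pi) 0
  have h2 : p (2*Real.pi) - q (2*Real.pi) = p 0 - q 0 := by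
    field_simp at this
    linarith
  exact h2

lemma peel (g : ℂ → ℂ)
    (hcont : ContinuousOn g (closedBall (0 : ℂ) 1))
    (hdiff : DifferentiableOn ℂ g (ball (0 : ℂ) 1))
    (hb : ∀ z ∈ sphere (0 : ℂ) 1, ‖g z‖ = 1)
    (w : ℂ) (hw : w ∈ ball (0:ℂ) 1) (hgw : g w = 0) :
    ∃ (h : ℂ → ℂ) (m : ℕ), 1 ≤ m ∧
      ContinuousOn h (closedBall (0 : ℂ) 1) ∧
      DifferentiableOn ℂ h (ball (0 : ℂ) 1) ∧
      (∀ z ∈ sphere (0:ℂ) 1, ‖h z‖ = 1) ∧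
      (∀ z ∈ ball (0:ℂ) 1, (h z = 0 ↔ g z = 0 ∧ z ≠ w)) ∧
      (∀ z ∈ closedBall (0:ℂ) 1, z ≠ w →
        g z = h z * ((z - w) / (1 - (starRingEnd ℂ) w * z))^m) := by
  have gA : AnalyticOnNhd ℂ g (ball (0:ℂ) 1) := hdiff.analyticOnNhd isOpen_ball
  have hA : AnalyticAt ℂ g w := gA w hw
  have hnev : ¬ (∀ᶠ z in 𝓝 w, g z = 0) := by
    intro hev
    have hfreq : ∃ᶠ z in 𝓝[≠] w, g z = 0 :=
      (hev.filter_mono nhdsWithin_le_nhds).frequently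
    have := gA.eqOn_zero_of_preconnected_of_frequently_eq_zero
      (convex_ball (0:ℂ) 1).isPreconnected hw hfreq
    exact not_ball_zero g hcont hb (fun z hz => this hz)
  have horder : analyticOrderAt g w ≠ ⊤ := fun htop => hnev (analyticOrderAt_eq_top.mp htop)
  obtain ⟨m, hm⟩ : ∃ m : ℕ, analyticOrderAt g w = m := by
    rcases WithTop.ne_top_iff_exists.mp horder with ⟨m, hm⟩
    exact ⟨m, hm.symm⟩
  obtain ⟨q, hqA, hq0, hqe⟩ := hA.analyticOrderAt_eq_natCast.mp hm
  have hm1 : 1 ≤ m := by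
    by_contra hc
    have hm0 : m = 0 := by omega
    have := hqe.self_of_nhds
    rw [hm0, pow_zero, one_smul, hgw] at this
    exact hq0 this.symm
  obtain ⟨ε, hε, hball⟩ := Metric.eventually_nhds_iff.mp hqe
  set h : ℂ → ℂ := fun z => if z = w then q w * (1 - (starRingEnd ℂ) w * w)^m
    else g z * ((1 - (starRingEnd ℂ) w * z)/(z - w))^m with hdef
  have hagree : ∀ z, dist z w < ε → h z = q z * (1 - (starRingEnd ℂ) w * z)^m := by
    intro z hz
    by_cases hzw : z = w
    · subst hzw; simp [hdef]
    · simp only [hdef, if_neg hzw]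
      have hgz := hball hz
      rw [smul_eq_mul] at hgz
      rw [hgz, div_pow]
      have hzw' : z - w ≠ 0 := sub_ne_zero.mpr hzw
      field_simp
  have hEqw : h =ᶠ[𝓝 w] fun z => q z * (1 - (starRingEnd ℂ) w * z)^m := by
    filter_upwards [Metric.ball_mem_nhds w hε] with z hz
    exact hagree z (mem_ball.mp hz)
  have hq_diff : DifferentiableAt ℂ (fun z => q z * (1 - (starRingEnd ℂ) w * z)^m) w :=
    hqA.differentiableAt.mul
      (((differentiableAt_const _).sub ((differentiableAt_const _).mul differentiableAt_id)).pow m)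
  have hDw : DifferentiableAt ℂ h w := hEqw.differentiableAt_iff.mpr hq_diff
  -- eventually-ne-w congruence
  have hEqform : ∀ z : ℂ, z ≠ w → ∀ s : Set ℂ,
      h =ᶠ[𝓝[s] z] fun z => g z * ((1 - (starRingEnd ℂ) w * z)/(z - w))^m := by
    intro z hzw s
    have : ∀ᶠ x in 𝓝 z, x ≠ w := isOpen_ne.eventually_mem hzw
    filter_upwards [this.filter_mono nhdsWithin_le_nhds] with x hx
    simp only [hdef, if_neg hx]
  have hDiffOn : DifferentiableOn ℂ h (ball (0:ℂ) 1) := by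
    intro z hz
    by_cases hzw : z = w
    · subst hzw; exact hDw.differentiableWithinAt
    · have hmob : DifferentiableAt ℂ
          (fun x : ℂ => ((1 - (starRingEnd ℂ) w * x)/(x - w))^m) z := by
        apply DifferentiableAt.pow
        apply DifferentiableAt.div
        · exact (differentiableAt_const _).sub ((differentiableAt_const _).mul differentiableAt_id)
        · exact differentiableAt_id.sub (differentiableAt_const _)
        · exact sub_ne_zero.mpr hzw
      have hform : DifferentiableWithinAt ℂ
          (fun x => g x * ((1 - (starRingEnd ℂ) w * x)/(x - w))^m) (ball (0:ℂ) 1) z :=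
        (hdiff z hz).mul hmob.differentiableWithinAt
      exact ((hEqform z hzw _).differentiableWithinAt_iff (by simp [hdef, if_neg hzw])).mpr hform
  have hContOn : ContinuousOn h (closedBall (0:ℂ) 1) := by
    intro z hz
    by_cases hzw : z = w
    · subst hzw; exact hDw.continuousAt.continuousWithinAt
    · have hmob : ContinuousAt
          (fun x : ℂ => ((1 - (starRingEnd ℂ) w * x)/(x - w))^m) z := by
        apply ContinuousAt.pow
        apply ContinuousAt.div
        · exact continuousAt_const.sub (continuousAt_const.mul continuousAt_id)
        · exact continuousAt_id.sub continuousAt_const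
        · exact sub_ne_zero.mpr hzw
      have hform : ContinuousWithinAt
          (fun x => g x * ((1 - (starRingEnd ℂ) w * x)/(x - w))^m) (closedBall (0:ℂ) 1) z :=
        (hcont z hz).mul hmob.continuousWithinAt
      exact (hform.congr_of_eventuallyEq (hEqform z hzw _) (by simp [hdef, if_neg hzw]))
  have hfac : ∀ z ∈ closedBall (0:ℂ) 1, z ≠ w →
      g z = h z * ((z - w) / (1 - (starRingEnd ℂ) w * z))^m := by
    intro z hz hzw
    have hne1 : 1 - (starRingEnd ℂ) w * z ≠ 0 := aux_ne w z hw hz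
    have hzw' : z - w ≠ 0 := sub_ne_zero.mpr hzw
    simp only [hdef, if_neg hzw, div_pow]
    field_simp
  have hbd : ∀ z ∈ sphere (0:ℂ) 1, ‖h z‖ = 1 := by
    intro z hz
    have hzw : z ≠ w := by
      intro hzeq
      have h1 : ‖z‖ = 1 := by
        simpa [mem_sphere_iff_norm] using hz
      have h2 : ‖w‖ < 1 := by
        simpa [mem_ball, dist_zero_right] using hw
      rw [hzeq] at h1; linarith
    have hne1 : 1 - (starRingEnd ℂ) w * z ≠ 0 := aux_ne w z hw (sphere_subset_closedBall hz)
    have hzw' : z - w ≠ 0 := sub_ne_zero.mpr hzw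
    simp only [hdef, if_neg hzw]
    rw [norm_mul, norm_pow, norm_div, aux_bd w z hz, hb z hz]
    rw [div_self (norm_ne_zero_iff.mpr hzw')]
    simp
  have hzero : ∀ z ∈ ball (0:ℂ) 1, (h z = 0 ↔ g z = 0 ∧ z ≠ w) := by
    intro z hz
    by_cases hzw : z = w
    · rw [hzw] at *
      simp only [hdef, if_pos rfl]
      have hne1 : 1 - (starRingEnd ℂ) w * w ≠ 0 := aux_ne w w hw (ball_subset_closedBall hw)
      constructor
      · intro h0
        exfalso
        rcases mul_eq_zero.mp h0 with h1 | h1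
        · exact hq0 h1
        · exact hne1 ((pow_eq_zero_iff (by omega : m ≠ 0)).mp h1)
      · rintro ⟨_, h2⟩; exact absurd rfl h2
    · have hne1 : 1 - (starRingEnd ℂ) w * z ≠ 0 := aux_ne w z hw (ball_subset_closedBall hz)
      have hzw' : z - w ≠ 0 := sub_ne_zero.mpr hzw
      simp only [hdef, if_neg hzw]
      constructor
      · intro h0
        rcases mul_eq_zero.mp h0 with h1 | h1
        · exact ⟨h1, hzw⟩
        · exfalso
          have hdiv : (1 - (starRingEnd ℂ) w * z)/(z - w) = 0 :=
            (pow_eq_zero_iff (by omega : m ≠ 0)).mp h1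
          rcases div_eq_zero_iff.mp hdiv with h2 | h2
          · exact hne1 h2
          · exact hzw' h2
      · rintro ⟨h1, _⟩; rw [h1, zero_mul]
  exact ⟨h, m, hm1, hContOn, hDiffOn, hbd, hzero, hfac⟩

lemma key : ∀ (n : ℕ) (g : ℂ → ℂ) (a : ℝ → ℝ),
    ContinuousOn g (closedBall (0 : ℂ) 1) →
    DifferentiableOn ℂ g (ball (0 : ℂ) 1) →
    (∀ z ∈ sphere (0:ℂ) 1, ‖g z‖ = 1) →
    Continuous a →
    (∀ θ : ℝ, g (Complex.exp (θ * Complex.I)) = Complex.exp (a θ * Complex.I)) →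
    {z | z ∈ ball (0:ℂ) 1 ∧ g z = 0}.ncard ≤ n →
    {z | z ∈ ball (0:ℂ) 1 ∧ g z = 0}.Nonempty →
    0 < a (2 * Real.pi) - a 0 := by
  intro n
  induction n with
  | zero =>
    intro g a hcont hdiff hb ha hlift hcard hne
    have hfin := zeros_finite g hcont hdiff hb
    have := (Set.ncard_pos hfin).mpr hne
    omega
  | succ n ih =>
    intro g a hcont hdiff hb ha hlift hcard hne
    obtain ⟨w, hw, hgw⟩ := hne
    obtain ⟨h, m, hm1, hContOn, hDiffOn, hbd, hzero, hfac⟩ := peel g hcont hdiff hb w hw hgw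
    set b : ℝ → ℝ := fun θ => a θ - m * blift w θ with hbdef
    have hbcont : Continuous b := ha.sub (continuous_const.mul (blift_continuous w hw))
    have hblift : ∀ θ : ℝ, h (Complex.exp (θ * Complex.I)) = Complex.exp (b θ * Complex.I) := by
      intro θ
      set z := Complex.exp ((θ:ℝ) * Complex.I) with hzdef
      have hzs : z ∈ sphere (0:ℂ) 1 := by
        simp [hzdef, mem_sphere_iff_norm, Complex.norm_exp_ofReal_mul_I]
      have hzw : z ≠ w := by
        intro hzeq
        have h1 : ‖z‖ = 1 := by
          simpa [mem_sphere_iff_norm] using hzs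
        have h2 : ‖w‖ < 1 := by
          simpa [mem_ball, dist_zero_right] using hw
        rw [hzeq] at h1; linarith
      have hfaceq := hfac z (sphere_subset_closedBall hzs) hzw
      rw [hlift θ] at hfaceq
      have hB := blift_exp w hw θ
      rw [← hzdef] at hB
      rw [← hB] at hfaceq
      have hcomb : Complex.exp (b θ * Complex.I) * (Complex.exp (blift w θ * Complex.I))^m
          = Complex.exp (a θ * Complex.I) := by
        rw [← Complex.exp_nat_mul, ← Complex.exp_add]
        congr 1
        rw [hbdef]
        push_cast
        ring
      have hEne : (Complex.exp (blift w θ * Complex.I))^m ≠ 0 :=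
        pow_ne_zero m (Complex.exp_ne_zero _)
      apply mul_right_cancel₀ hEne
      rw [hcomb, ← hfaceq]
    have hsub : {z | z ∈ ball (0:ℂ) 1 ∧ h z = 0}
        = {z | z ∈ ball (0:ℂ) 1 ∧ g z = 0} \ {w} := by
      ext z
      simp only [Set.mem_setOf_eq, Set.mem_diff, Set.mem_singleton_iff]
      constructor
      · rintro ⟨hz, h0⟩
        have := (hzero z hz).mp h0
        exact ⟨⟨hz, this.1⟩, this.2⟩
      · rintro ⟨⟨hz, h0⟩, hne⟩
        exact ⟨hz, (hzero z hz).mpr ⟨h0, hne⟩⟩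
    have hwdiff : b (2 * Real.pi) - b 0 = (a (2 * Real.pi) - a 0) - 2 * Real.pi * m := by
      rw [hbdef]
      simp only
      rw [blift_period w]
      ring
    have hpi : (0:ℝ) < 2 * Real.pi * m := by
      have := Real.pi_pos
      have : (1:ℝ) ≤ m := by exact_mod_cast hm1
      nlinarith [Real.pi_pos]
    rcases Set.eq_empty_or_nonempty {z | z ∈ ball (0:ℂ) 1 ∧ h z = 0} with hemp | hne'
    · have hnv : ∀ z ∈ ball (0:ℂ) 1, h z ≠ 0 := by
        intro z hz h0
        exact (Set.eq_empty_iff_forall_notMem.mp hemp z) ⟨hz, h0⟩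
      obtain ⟨z₀, _, hconst⟩ := const_of_nonvanishing h hContOn hDiffOn hbd hnv
      have hexpeq : ∀ θ, Complex.exp (b θ * Complex.I) = Complex.exp (((fun _ => b 0) θ : ℝ) * Complex.I) := by
        intro θ
        have h1 := hblift θ
        have h2 := hblift 0
        have hzs : ∀ ψ : ℝ, Complex.exp ((ψ:ℝ) * Complex.I) ∈ closedBall (0:ℂ) 1 := by
          intro ψ
          apply sphere_subset_closedBall
          simp [mem_sphere_iff_norm, Complex.norm_exp_ofReal_mul_I]
        rw [hconst _ (hzs θ)] at h1
        rw [hconst _ (hzs 0)] at h2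
        simp only
        rw [← h1, ← h2]
      have hb0 := lift_diff_const b (fun _ => b 0) hbcont continuous_const hexpeq
      simp only [sub_self] at hb0
      linarith
    · have hfin := zeros_finite g hcont hdiff hb
      have hmem : w ∈ {z | z ∈ ball (0:ℂ) 1 ∧ g z = 0} := ⟨hw, hgw⟩
      have hpos := (Set.ncard_pos hfin).mpr ⟨w, hmem⟩
      have hcard' : {z | z ∈ ball (0:ℂ) 1 ∧ h z = 0}.ncard ≤ n := by
        rw [hsub, Set.ncard_diff_singleton_of_mem hmem]
        omega
      have := ih h b hContOn hDiffOn hbd hbcont hblift hcard' hne'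
      linarith

/-- A function `g`, continuous on the closed unit disc, holomorphic on the
open disc, with `|g| = 1` on the boundary circle, and whose boundary restriction has
winding number `0` around the origin (expressed via a continuous angular lift `a` with
`g (e^{iθ}) = e^{i a(θ)}` and `a(2π) = a(0)`), is constant, equal to some `z₀` of
modulus `1`. -/
theorem constant_of_winding_zero (g : ℂ → ℂ)
    (hcont : ContinuousOn g (closedBall (0 : ℂ) 1))
    (hdiff : DifferentiableOn ℂ g (ball (0 : ℂ) 1))
    (hb : ∀ z ∈ sphere (0 : ℂ) 1, ‖g z‖ = 1)
    (a : ℝ → ℝ) (ha : Continuous a)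
    (hlift : ∀ θ : ℝ, g (Complex.exp (θ * Complex.I)) = Complex.exp (a θ * Complex.I))
    (hwind : a (2 * Real.pi) = a 0) :
    ∃ z₀ : ℂ, ‖z₀‖ = 1 ∧ ∀ z ∈ closedBall (0 : ℂ) 1, g z = z₀ := by
  rcases Set.eq_empty_or_nonempty {z | z ∈ ball (0:ℂ) 1 ∧ g z = 0} with hemp | hne
  · exact const_of_nonvanishing g hcont hdiff hb
      (fun z hz h0 => Set.eq_empty_iff_forall_notMem.mp hemp z ⟨hz, h0⟩)
  · exfalso
    have := key {z | z ∈ ball (0:ℂ) 1 ∧ g z = 0}.ncard g a hcont hdiff hb ha hlift le_rfl hne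
    rw [hwind] at this
    linarith
end

section
/- Let φ : D² → D² be continuous on the closed unit disc, holomorphic on the interior, mapping ∂D² to ∂D², with winding number 1 of φ|_{∂D²} around the origin, and with φ(0) = 0. Then φ is a rotation: φ(z) = z₀ · z for some z₀ ∈ ℂ with |z₀| = 1. -/
open Metric Complex Set Topology Filter

/-! Auxiliary lemmas -/

private lemma exp_ofReal_mul_I_add (x y : ℝ) :
    Complex.exp (((x + y : ℝ) : ℂ) * I) = Complex.exp ((x : ℂ) * I) * Complex.exp ((y : ℂ) * I) := by
  push_cast
  rw [add_mul, Complex.exp_add]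

private lemma normSq_identity (w z : ℂ) :
    Complex.normSq (1 - (starRingEnd ℂ) w * z) - Complex.normSq (z - w)
      = (1 - Complex.normSq w) * (1 - Complex.normSq z) := by
  simp only [Complex.normSq_apply, Complex.sub_re, Complex.sub_im, Complex.mul_re, Complex.mul_im,
    Complex.one_re, Complex.one_im, Complex.conj_re, Complex.conj_im]
  ring


private lemma hD_pos {r : ℝ} (hr0 : 0 < r) (hr1 : r < 1) :
    (0 : ℝ) < 1 - ((1 - r ^ 2) / 2) ^ 2 := by
  have hr2 : 0 < r ^ 2 := by positivity
  have hr2' : r ^ 2 < 1 := by nlinarith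
  have h1 : 0 < 1 - r ^ 2 := by linarith
  have h3 : (1 - r ^ 2) ^ 2 ≤ 1 - r ^ 2 := by nlinarith
  nlinarith

private lemma blaschke_le {w z : ℂ} (hw : norm w ≤ 1) (hz : norm z ≤ 1) :
    norm (z - w) ≤ norm (1 - (starRingEnd ℂ) w * z) := by
  rw [Complex.norm_def, Complex.norm_def]
  apply Real.sqrt_le_sqrt
  have h := normSq_identity w z
  have hw' : Complex.normSq w ≤ 1 := by
    rw [← Complex.sq_norm]; nlinarith [norm_nonneg w]
  have hz' : Complex.normSq z ≤ 1 := by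
    rw [← Complex.sq_norm]; nlinarith [norm_nonneg z]
  nlinarith

private lemma blaschke_strong {r : ℝ} (hr0 : 0 < r) (hr1 : r < 1) {w : ℂ}
    (hw : norm w ≤ r) :
    norm ((r : ℂ) - w)
      ≤ Real.sqrt (1 - ((1 - r ^ 2) / 2) ^ 2) * norm (1 - (starRingEnd ℂ) w * (r : ℂ)) := by
  have hD : (0 : ℝ) ≤ 1 - ((1 - r ^ 2) / 2) ^ 2 := (hD_pos hr0 hr1).le
  rw [Complex.norm_def, Complex.norm_def, ← Real.sqrt_mul hD]
  apply Real.sqrt_le_sqrt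
  have h := normSq_identity w (r : ℂ)
  have h1 : Complex.normSq w ≤ r ^ 2 := by
    rw [← Complex.sq_norm]; nlinarith [norm_nonneg w]
  have h2 : Complex.normSq ((r : ℂ)) = r ^ 2 := by
    rw [Complex.normSq_ofReal]; ring
  have habs : norm (1 - (starRingEnd ℂ) w * (r : ℂ)) ≤ 1 + r ^ 2 := by
    calc norm (1 - (starRingEnd ℂ) w * (r : ℂ))
        ≤ norm (1:ℂ) + norm ((starRingEnd ℂ) w * (r : ℂ)) := by
          simpa [sub_eq_add_neg] using norm_add_le 1 (-((starRingEnd ℂ) w * (r : ℂ)))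
      _ ≤ 1 + r ^ 2 := by
          rw [norm_one, norm_mul, Complex.norm_conj, Complex.norm_real, Real.norm_eq_abs, abs_of_pos hr0]
          nlinarith [norm_nonneg w]
  have h3 : Complex.normSq (1 - (starRingEnd ℂ) w * (r : ℂ)) ≤ (1 + r ^ 2) ^ 2 := by
    rw [← Complex.sq_norm]
    nlinarith [norm_nonneg (1 - (starRingEnd ℂ) w * (r : ℂ))]
  rw [h2] at h
  -- reduce to: ((1-r^2)/2)^2 * normSq (1 - conj w * r) ≤ (1 - normSq w) * (1 - r^2)
  have hstep1 : ((1 - r ^ 2) / 2) ^ 2 * Complex.normSq (1 - (starRingEnd ℂ) w * (r : ℂ))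
      ≤ ((1 - r ^ 2) / 2) ^ 2 * (1 + r ^ 2) ^ 2 :=
    mul_le_mul_of_nonneg_left h3 (sq_nonneg _)
  have hstep2 : ((1 - r ^ 2) / 2) ^ 2 * (1 + r ^ 2) ^ 2 ≤ (1 - r ^ 2) ^ 2 := by
    have h4 : (1 + r ^ 2) ^ 2 ≤ 4 := by
      have hr2' : r ^ 2 < 1 := by nlinarith
      nlinarith
    have h5 := mul_le_mul_of_nonneg_left h4 (sq_nonneg ((1 - r ^ 2) / 2))
    nlinarith
  have hstep3 : (1 - r ^ 2) ^ 2 ≤ (1 - Complex.normSq w) * (1 - r ^ 2) := by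
    have h6 : (0 : ℝ) ≤ 1 - r ^ 2 := by nlinarith
    nlinarith
  nlinarith [Complex.normSq_nonneg (1 - (starRingEnd ℂ) w * (r : ℂ))]

private lemma no_cross {f : ℝ → ℝ} (hf : Continuous f)
    (hint : ∀ t, ∃ n : ℤ, f t = n * (2 * Real.pi)) {s t : ℝ} (h : f s < f t) : False := by
  have hpi := Real.pi_pos
  obtain ⟨n0, h0⟩ := hint s
  obtain ⟨n1, h1⟩ := hint t
  have hn : (n0 : ℝ) < n1 := by nlinarith
  have hn' : n0 < n1 := by exact_mod_cast hn
  have hn'' : (n0 : ℝ) + 1 ≤ n1 := by exact_mod_cast hn'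
  have hmem : (n0 : ℝ) * (2 * Real.pi) + Real.pi ∈ Set.Icc (f s) (f t) := by
    constructor
    · rw [h0]; linarith
    · rw [h1]; nlinarith
  obtain ⟨u, hu⟩ := intermediate_value_univ s t hf hmem
  obtain ⟨m, hm⟩ := hint u
  rw [hu] at hm
  have hcast : ((2 * n0 + 1 : ℤ) : ℝ) * Real.pi = ((2 * m : ℤ) : ℝ) * Real.pi := by
    push_cast
    nlinarith
  have := mul_right_cancel₀ (ne_of_gt hpi) hcast
  have : (2 * n0 + 1 : ℤ) = 2 * m := by exact_mod_cast this
  omega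

private lemma eq_of_int_valued {f : ℝ → ℝ} (hf : Continuous f)
    (hint : ∀ t, ∃ n : ℤ, f t = n * (2 * Real.pi)) (s t : ℝ) : f s = f t := by
  rcases lt_trichotomy (f s) (f t) with h | h | h
  · exact absurd h (fun h => no_cross hf hint h)
  · exact h
  · exact absurd h (fun h => no_cross hf hint h)

private lemma boundary_form {h : ℂ → ℂ} {c : ℝ → ℝ}
    (hl : ∀ θ : ℝ, h (Complex.exp ((θ : ℂ) * I)) = Complex.exp ((c θ : ℂ) * I))
    {z : ℂ} (hz : z ∈ sphere (0 : ℂ) 1) :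
    h z = Complex.exp ((c (Complex.arg z) : ℂ) * I) := by
  have h1 : norm z = 1 := by
    simpa using mem_sphere_zero_iff_norm.mp hz
  have h2 := Complex.norm_mul_exp_arg_mul_I z
  rw [h1, Complex.ofReal_one, one_mul] at h2
  conv_lhs => rw [← h2]
  exact hl (Complex.arg z)

private lemma abs_le_one_of_boundary {h : ℂ → ℂ}
    (hc : ContinuousOn h (closedBall 0 1)) (hd : DifferentiableOn ℂ h (ball 0 1))
    (hb : ∀ z ∈ sphere (0 : ℂ) 1, norm (h z) ≤ 1) :
    ∀ z ∈ closedBall (0 : ℂ) 1, norm (h z) ≤ 1 := by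
  intro z hz
  have hcl : closure (ball (0 : ℂ) 1) = closedBall 0 1 := closure_ball 0 one_ne_zero
  have := Complex.norm_le_of_forall_mem_frontier_norm_le (isBounded_ball (x := (0:ℂ)) (r := 1))
    ⟨hd, by rw [hcl]; exact hc⟩ (C := 1) ?_ (z := z) (by rw [hcl]; exact hz)
  · simpa using this
  · intro w hw
    rw [frontier_ball 0 one_ne_zero] at hw
    simpa using hb w hw

set_option maxHeartbeats 1000000 in
private lemma key_s6 : ∀ (k : ℕ) (h : ℂ → ℂ) (c : ℝ → ℝ) (r ε : ℝ),
    0 < r → r < 1 →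
    ContinuousOn h (closedBall 0 1) →
    DifferentiableOn ℂ h (ball 0 1) →
    Continuous c →
    (∀ θ : ℝ, h (Complex.exp ((θ : ℂ) * I)) = Complex.exp ((c θ : ℂ) * I)) →
    c (2 * Real.pi) ≤ c 0 →
    (∀ z ∈ closedBall (0 : ℂ) 1, r ≤ norm z → 1 / 2 ≤ norm (h z)) →
    ε ≤ norm (h (r : ℂ)) →
    Real.sqrt (1 - ((1 - r ^ 2) / 2) ^ 2) ^ k < ε →
    ∀ z ∈ closedBall (0 : ℂ) 1, h z = h 1 := by
  intro k
  induction k with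
  | zero =>
    intro h c r ε hr0 hr1 hc hd hcc hl hw hann hεr hεk
    exfalso
    have hb1 : ∀ z ∈ sphere (0 : ℂ) 1, norm (h z) ≤ 1 := by
      intro z hz
      rw [boundary_form hl hz, Complex.norm_exp_ofReal_mul_I]
    have hrc : (r : ℂ) ∈ closedBall (0 : ℂ) 1 := by
      simp [abs_of_pos hr0, hr1.le]
    have := abs_le_one_of_boundary hc hd hb1 (r : ℂ) hrc
    simp only [pow_zero] at hεk
    linarith
  | succ k ih =>
    intro h c r ε hr0 hr1 hc hd hcc hl hw hann hεr hεk
    set C := Real.sqrt (1 - ((1 - r ^ 2) / 2) ^ 2) with hCdef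
    have hD0 : (0 : ℝ) < 1 - ((1 - r ^ 2) / 2) ^ 2 := hD_pos hr0 hr1
    have hCpos : 0 < C := Real.sqrt_pos.mpr hD0
    by_cases hzero : ∃ w ∈ ball (0 : ℂ) 1, h w = 0
    · exfalso
      obtain ⟨w, hwball, hw0⟩ := hzero
      have hwr : norm w < r := by
        by_contra hge
        push_neg at hge
        have := hann w (ball_subset_closedBall hwball) hge
        rw [hw0] at this
        simp at this
        linarith
      have hw1 : norm w ≤ 1 := le_trans hwr.le hr1.le
      set h₁ : ℂ → ℂ := fun z => dslope h w z * (1 - (starRingEnd ℂ) w * z) with hh₁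
      have hmem : closedBall (0 : ℂ) 1 ∈ 𝓝 w :=
        Filter.mem_of_superset (isOpen_ball.mem_nhds hwball) ball_subset_closedBall
      have hdiffw : DifferentiableAt ℂ h w := hd.differentiableAt (isOpen_ball.mem_nhds hwball)
      have hc₁ : ContinuousOn h₁ (closedBall 0 1) :=
        ((continuousOn_dslope hmem).mpr ⟨hc, hdiffw⟩).mul (by fun_prop)
      have hd₁ : DifferentiableOn ℂ h₁ (ball 0 1) :=
        ((differentiableOn_dslope (isOpen_ball.mem_nhds hwball)).mpr hd).mul
          (((differentiable_const (1 : ℂ)).sub ((differentiable_const _).mul differentiable_id)).differentiableOn)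
      have hfact : ∀ z : ℂ, h z = (z - w) * dslope h w z := by
        intro z
        have := sub_smul_dslope h w z
        rw [hw0, sub_zero, smul_eq_mul] at this
        exact this.symm
      have habs : ∀ z : ℂ, norm z ≤ 1 → norm (h z) ≤ norm (h₁ z) := by
        intro z hz
        rw [hfact z, hh₁]
        simp only [norm_mul]
        rw [mul_comm (norm (dslope h w z))]
        exact mul_le_mul_of_nonneg_right (blaschke_le hw1 hz) (norm_nonneg _)
      have hann₁ : ∀ z ∈ closedBall (0 : ℂ) 1, r ≤ norm z → 1 / 2 ≤ norm (h₁ z) := by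
        intro z hz hrz
        refine le_trans (hann z hz hrz) (habs z ?_)
        simpa using mem_closedBall_zero_iff.mp hz
      have hstep : norm (h (r : ℂ)) ≤ C * norm (h₁ (r : ℂ)) := by
        rw [hfact (r : ℂ), hh₁]
        simp only [norm_mul]
        calc norm ((r : ℂ) - w) * norm (dslope h w (r : ℂ))
            ≤ (C * norm (1 - (starRingEnd ℂ) w * (r : ℂ))) * norm (dslope h w (r : ℂ)) :=
              mul_le_mul_of_nonneg_right (blaschke_strong hr0 hr1 hwr.le) (norm_nonneg _)
          _ = C * (norm (dslope h w (r : ℂ)) * norm (1 - (starRingEnd ℂ) w * (r : ℂ))) := by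
              ring
      have hεr₁ : ε / C ≤ norm (h₁ (r : ℂ)) := by
        rw [div_le_iff₀ hCpos]
        calc ε ≤ norm (h (r : ℂ)) := hεr
          _ ≤ C * norm (h₁ (r : ℂ)) := hstep
          _ = norm (h₁ (r : ℂ)) * C := mul_comm _ _
      have hεk₁ : C ^ k < ε / C := by
        rw [lt_div_iff₀ hCpos]
        calc C ^ k * C = C ^ (k + 1) := (pow_succ C k).symm
          _ < ε := hεk
      -- the lift of h₁
      set q : ℝ → ℂ := fun θ => 1 - (starRingEnd ℂ) w * Complex.exp ((θ : ℂ) * I) with hqdef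
      have hqslit : ∀ θ : ℝ, q θ ∈ Complex.slitPlane := by
        intro θ
        left
        have hle : ((starRingEnd ℂ) w * Complex.exp ((θ : ℂ) * I)).re
            ≤ norm ((starRingEnd ℂ) w * Complex.exp ((θ : ℂ) * I)) := Complex.re_le_norm _
        have : norm ((starRingEnd ℂ) w * Complex.exp ((θ : ℂ) * I)) < 1 := by
          rw [norm_mul, Complex.norm_conj, Complex.norm_exp_ofReal_mul_I, mul_one]
          linarith
        simp only [hqdef, Complex.sub_re, Complex.one_re]
        linarith
      have hqne : ∀ θ : ℝ, q θ ≠ 0 := fun θ => Complex.slitPlane_ne_zero (hqslit θ)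
      have hqcont : Continuous q := by fun_prop
      set c₁ : ℝ → ℝ := fun θ => c θ - θ + 2 * Complex.arg (q θ) with hc₁def
      have hcc₁ : Continuous c₁ := by
        refine ((hcc.sub continuous_id).add (continuous_const.mul ?_))
        refine continuous_iff_continuousAt.mpr fun θ => ?_
        exact (Complex.continuousAt_arg (hqslit θ)).comp hqcont.continuousAt
      have hl₁ : ∀ θ : ℝ, h₁ (Complex.exp ((θ : ℂ) * I)) = Complex.exp ((c₁ θ : ℂ) * I) := by
        intro θ
        set z := Complex.exp ((θ : ℂ) * I) with hzdef
        have hzabs : norm z = 1 := Complex.norm_exp_ofReal_mul_I θ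
        have hzw : z ≠ w := by
          intro e
          rw [← e] at hwr
          rw [hzabs] at hwr
          linarith
        have hzz : z * (starRingEnd ℂ) z = 1 := by
          rw [Complex.mul_conj]
          rw [Complex.normSq_eq_norm_sq, hzabs]
          norm_num
        have hzw2 : z - w = z * (starRingEnd ℂ) (q θ) := by
          simp only [hqdef, map_sub, map_one, map_mul, Complex.conj_conj, ← hzdef]
          rw [mul_sub, mul_one]
          rw [show z * (w * (starRingEnd ℂ) z) = w * (z * (starRingEnd ℂ) z) by ring, hzz, mul_one]
        have hconjq : (starRingEnd ℂ) (q θ) =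
            (norm (q θ) : ℂ) * Complex.exp ((-(Complex.arg (q θ)) : ℝ) * I) := by
          conv_lhs => rw [← Complex.norm_mul_exp_arg_mul_I (q θ)]
          rw [map_mul, Complex.conj_ofReal, ← Complex.exp_conj]
          congr 1
          simp only [map_mul, Complex.conj_ofReal, Complex.conj_I]
          push_cast
          ring
        have key2 : Complex.exp ((c₁ θ : ℂ) * I) * (z - w) = h z * q θ := by
          have hlz : h z = Complex.exp ((c θ : ℂ) * I) := by rw [hzdef]; exact hl θ
          set A : ℝ := norm (q θ) with hA
          set α : ℝ := Complex.arg (q θ) with hα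
          have hq' : q θ = (A : ℂ) * Complex.exp ((α : ℂ) * I) :=
            (Complex.norm_mul_exp_arg_mul_I (q θ)).symm
          rw [hzw2, hlz, hconjq, hq']
          have l1 : Complex.exp ((c₁ θ : ℂ) * I) * (z * ((A : ℂ) * Complex.exp (((-α : ℝ) : ℂ) * I)))
              = (A : ℂ) * (Complex.exp (((c₁ θ : ℝ) : ℂ) * I)
                  * (Complex.exp ((θ : ℂ) * I) * Complex.exp (((-α : ℝ) : ℂ) * I))) := by
            rw [hzdef]; ring
          have l2 : Complex.exp ((c θ : ℂ) * I) * ((A : ℂ) * Complex.exp ((α : ℂ) * I))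
              = (A : ℂ) * (Complex.exp ((c θ : ℂ) * I) * Complex.exp ((α : ℂ) * I)) := by
            ring
          rw [l1, l2, ← exp_ofReal_mul_I_add, ← exp_ofReal_mul_I_add, ← exp_ofReal_mul_I_add]
          rw [show c₁ θ + (θ + -α) = c θ + α by simp only [hc₁def]; ring]
        have hfact2 : h₁ z * (z - w) = h z * q θ := by
          rw [hh₁]
          show dslope h w z * (1 - (starRingEnd ℂ) w * z) * (z - w) = h z * q θ
          have hqz : q θ = 1 - (starRingEnd ℂ) w * z := by rw [hzdef]
          rw [hfact z, hqz]
          ring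
        have := hfact2.trans key2.symm
        exact mul_right_cancel₀ (sub_ne_zero.mpr hzw) this
      have hq2π : q (2 * Real.pi) = q 0 := by
        simp only [hqdef]
        congr 2
        push_cast
        rw [Complex.exp_two_pi_mul_I]
        norm_num [Complex.exp_zero]
      have hw₁ : c₁ (2 * Real.pi) ≤ c₁ 0 := by
        simp only [hc₁def, hq2π]
        have hpi := Real.pi_pos
        linarith
      have hconst := ih h₁ c₁ r (ε / C) hr0 hr1 hc₁ hd₁ hcc₁ hl₁ hw₁ hann₁ hεr₁ hεk₁
      have hmemθ : ∀ θ : ℝ, Complex.exp ((θ : ℂ) * I) ∈ closedBall (0 : ℂ) 1 := by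
        intro θ
        rw [mem_closedBall_zero_iff]
        simp [Complex.norm_exp_ofReal_mul_I]
      have hint : ∀ θ : ℝ, ∃ n : ℤ, (c₁ θ - c₁ 0) = n * (2 * Real.pi) := by
        intro θ
        have h1 : Complex.exp ((c₁ θ : ℂ) * I) = Complex.exp ((c₁ 0 : ℂ) * I) := by
          rw [← hl₁ θ, ← hl₁ 0, hconst _ (hmemθ θ), hconst _ (hmemθ 0)]
        have h2 : Complex.exp (((c₁ θ : ℂ) - (c₁ 0 : ℂ)) * I) = 1 := by
          rw [sub_mul, Complex.exp_sub, h1, div_self (Complex.exp_ne_zero _)]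
        rw [Complex.exp_eq_one_iff] at h2
        obtain ⟨n, hn⟩ := h2
        refine ⟨n, ?_⟩
        have hn' : ((c₁ θ : ℂ) - (c₁ 0 : ℂ)) * I = ((n : ℂ) * (2 * (Real.pi : ℂ))) * I := by
          rw [hn]; ring
        have := mul_right_cancel₀ Complex.I_ne_zero hn'
        exact_mod_cast this
      have heq := eq_of_int_valued (f := fun θ => c₁ θ - c₁ 0) (by fun_prop) hint (2 * Real.pi) 0
      simp only [sub_self] at heq
      have : c₁ (2 * Real.pi) = c₁ 0 := by linarith [heq]
      rw [hc₁def] at this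
      simp only [hq2π] at this
      have hpi := Real.pi_pos
      have : c (2 * Real.pi) = c 0 + 2 * Real.pi := by
        have h0 : c (2 * Real.pi) - 2 * Real.pi + 2 * Complex.arg (q 0)
            = c 0 - 0 + 2 * Complex.arg (q 0) := this
        linarith
      linarith
    · -- no zero in the ball : h is constant
      push_neg at hzero
      have hb1 : ∀ z ∈ sphere (0 : ℂ) 1, norm (h z) = 1 := by
        intro z hz
        rw [boundary_form hl hz]
        exact Complex.norm_exp_ofReal_mul_I _
      have hne : ∀ z ∈ closedBall (0 : ℂ) 1, h z ≠ 0 := by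
        intro z hz
        have hz1 : norm z ≤ 1 := by
          simpa using mem_closedBall_zero_iff.mp hz
        rcases lt_or_eq_of_le hz1 with hlt | heq
        · exact hzero z (by simpa [mem_ball_zero_iff] using hlt)
        · have : z ∈ sphere (0 : ℂ) 1 := by
            simp [mem_sphere_zero_iff_norm, heq]
          intro h0
          have := hb1 z this
          rw [h0] at this
          simp at this
      have hup : ∀ z ∈ closedBall (0 : ℂ) 1, norm (h z) ≤ 1 :=
        abs_le_one_of_boundary hc hd (fun z hz => (hb1 z hz).le)
      have hlow : ∀ z ∈ closedBall (0 : ℂ) 1, 1 ≤ norm (h z) := by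
        have hinv := abs_le_one_of_boundary (h := fun z => (h z)⁻¹)
          (hc.inv₀ hne)
          (hd.inv (fun z hz => hne z (ball_subset_closedBall hz)))
          (by
            intro z hz
            rw [norm_inv, hb1 z hz]
            norm_num)
        intro z hz
        have h1 := hinv z hz
        have h2 : norm (h z) ≠ 0 := by
          simpa using hne z hz
        rw [norm_inv] at h1
        have h3 : 0 < norm (h z) := lt_of_le_of_ne (norm_nonneg _) (Ne.symm h2)
        calc (1 : ℝ) = norm (h z) * (norm (h z))⁻¹ := by field_simp
          _ ≤ norm (h z) * 1 := mul_le_mul_of_nonneg_left h1 h3.le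
          _ = norm (h z) := mul_one _
      have hmax : IsMaxOn (norm ∘ h) (ball (0 : ℂ) 1) 0 := by
        intro z hz
        simp only [Function.comp_apply]
        calc norm (h z) ≤ 1 := hup z (ball_subset_closedBall hz)
          _ ≤ norm (h 0) := hlow 0 (mem_closedBall_self one_pos.le)
      have hcl : closure (ball (0 : ℂ) 1) = closedBall 0 1 := closure_ball 0 one_ne_zero
      have heq := Complex.eqOn_closure_of_isPreconnected_of_isMaxOn_norm
        (convex_ball (0 : ℂ) 1).isPreconnected isOpen_ball
        ⟨hd, by rw [hcl]; exact hc⟩ (mem_ball_self one_pos) hmax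
      intro z hz
      have e1 : h z = h 0 := heq (by rw [hcl]; exact hz)
      have e2 : h 1 = h 0 := heq (by
        rw [hcl, mem_closedBall_zero_iff]
        norm_num)
      rw [e1, e2]

theorem rotation_of_winding_one (φ : ℂ → ℂ)
    (hcont : ContinuousOn φ (closedBall (0 : ℂ) 1))
    (hdiff : DifferentiableOn ℂ φ (ball (0 : ℂ) 1))
    (hmaps : Set.MapsTo φ (closedBall (0 : ℂ) 1) (closedBall (0 : ℂ) 1))
    (hbd : ∀ z ∈ sphere (0 : ℂ) 1, φ z ∈ sphere (0 : ℂ) 1)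
    (hzero : φ 0 = 0)
    (a : ℝ → ℝ) (ha : Continuous a)
    (hlift : ∀ θ : ℝ, φ (Complex.exp (θ * Complex.I)) = Complex.exp (a θ * Complex.I))
    (hwind : a (2 * Real.pi) = a 0 + 2 * Real.pi) :
    ∃ z₀ : ℂ, ‖z₀‖ = 1 ∧ ∀ z ∈ closedBall (0 : ℂ) 1, φ z = z₀ * z := by
  set g : ℂ → ℂ := dslope φ 0 with hg
  have hmem : closedBall (0 : ℂ) 1 ∈ 𝓝 (0 : ℂ) :=
    Filter.mem_of_superset (isOpen_ball.mem_nhds (mem_ball_self one_pos)) ball_subset_closedBall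
  have hgc : ContinuousOn g (closedBall 0 1) := (continuousOn_dslope hmem).mpr
    ⟨hcont, hdiff.differentiableAt (isOpen_ball.mem_nhds (mem_ball_self one_pos))⟩
  have hgd : DifferentiableOn ℂ g (ball 0 1) :=
    (differentiableOn_dslope (isOpen_ball.mem_nhds (mem_ball_self one_pos))).mpr hdiff
  have hfact : ∀ z : ℂ, φ z = z * g z := by
    intro z
    have := sub_smul_dslope φ 0 z
    rw [hzero, sub_zero, sub_zero, smul_eq_mul] at this
    rw [hg, ← this]
  set c : ℝ → ℝ := fun θ => a θ - θ with hcdef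
  have hl : ∀ θ : ℝ, g (Complex.exp ((θ : ℂ) * I)) = Complex.exp ((c θ : ℂ) * I) := by
    intro θ
    have hz0 : Complex.exp ((θ : ℂ) * I) ≠ 0 := Complex.exp_ne_zero _
    have h1 := hfact (Complex.exp ((θ : ℂ) * I))
    rw [hlift θ] at h1
    apply mul_left_cancel₀ hz0
    rw [← h1]
    rw [show ((c θ : ℂ)) = ((a θ : ℝ) : ℂ) - ((θ : ℝ) : ℂ) by rw [hcdef]; push_cast; ring]
    rw [sub_mul, Complex.exp_sub]
    field_simp
  have hw : c (2 * Real.pi) ≤ c 0 := by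
    simp only [hcdef, hwind]
    linarith
  have hcc : Continuous c := by
    rw [hcdef]; fun_prop
  -- find the radius r
  set K := {z ∈ closedBall (0 : ℂ) 1 | norm (g z) ≤ 1 / 2} with hK
  have hKclosed : IsClosed K := by
    have hKeq : K = closedBall 0 1 ∩ g ⁻¹' (closedBall 0 (1 / 2)) := by
      ext z
      simp [hK, mem_closedBall_zero_iff]
    rw [hKeq]
    exact hgc.preimage_isClosed_of_isClosed Metric.isClosed_closedBall Metric.isClosed_closedBall
  have hKlt : ∀ z ∈ K, norm z < 1 := by
    intro z hz
    obtain ⟨hz1, hz2⟩ := hz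
    have hz1' : norm z ≤ 1 := by
      simpa using mem_closedBall_zero_iff.mp hz1
    rcases lt_or_eq_of_le hz1' with hlt | heq
    · exact hlt
    · exfalso
      have hzs : z ∈ sphere (0 : ℂ) 1 := by
        simp [mem_sphere_zero_iff_norm, heq]
      rw [boundary_form hl hzs, Complex.norm_exp_ofReal_mul_I] at hz2
      linarith
  obtain ⟨r, hr0, hr1, hrK⟩ : ∃ r : ℝ, 0 < r ∧ r < 1 ∧ ∀ z ∈ K, norm z < r := by
    rcases K.eq_empty_or_nonempty with hKe | hKne
    · exact ⟨1 / 2, by norm_num, by norm_num, by simp [hKe]⟩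
    · have hKcpt : IsCompact K :=
        (isCompact_closedBall (0 : ℂ) 1).of_isClosed_subset hKclosed (sep_subset _ _)
      obtain ⟨z₀, hz₀K, hz₀max⟩ := hKcpt.exists_isMaxOn hKne
        ((continuous_norm).continuousOn)
      refine ⟨(norm z₀ + 1) / 2, by positivity, ?_, ?_⟩
      · have := hKlt z₀ hz₀K; linarith
      · intro z hz
        have h1 : norm z ≤ norm z₀ := hz₀max hz
        have := hKlt z₀ hz₀K
        linarith
  have hann : ∀ z ∈ closedBall (0 : ℂ) 1, r ≤ norm z → 1 / 2 ≤ norm (g z) := by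
    intro z hz hrz
    by_contra hlt
    push_neg at hlt
    have hzK : z ∈ K := ⟨hz, hlt.le⟩
    exact absurd hrz (not_le.mpr (hrK z hzK))
  have hεr : 1 / 2 ≤ norm (g (r : ℂ)) := by
    refine hann (r : ℂ) ?_ ?_
    · rw [mem_closedBall_zero_iff]
      simp [abs_of_pos hr0, hr1.le]
    · rw [Complex.norm_real, Real.norm_eq_abs, abs_of_pos hr0]
  have hD0 : (0 : ℝ) < 1 - ((1 - r ^ 2) / 2) ^ 2 := hD_pos hr0 hr1
  have hC1 : Real.sqrt (1 - ((1 - r ^ 2) / 2) ^ 2) < 1 := by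
    have hr2' : r ^ 2 < 1 := by nlinarith
    have hd0 : (0 : ℝ) < 1 - r ^ 2 := by linarith
    have hd : 0 < ((1 - r ^ 2) / 2) ^ 2 := by positivity
    nlinarith [Real.sq_sqrt hD0.le, Real.sqrt_nonneg (1 - ((1 - r ^ 2) / 2) ^ 2)]
  obtain ⟨k, hk⟩ := exists_pow_lt_of_lt_one (by norm_num : (0 : ℝ) < 1 / 2) hC1
  have hconst := key_s6 k g c r (1 / 2) hr0 hr1 hgc hgd hcc hl hw hann hεr hk
  have hg1 : norm (g 1) = 1 := by
    have h0 : g 1 = Complex.exp ((c 0 : ℂ) * I) := by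
      have := hl 0
      simpa using this
    rw [h0]
    exact Complex.norm_exp_ofReal_mul_I _
  refine ⟨g 1, hg1, ?_⟩
  intro z hz
  rw [hfact z, hconst z hz, mul_comm]
end

section
/- Let ẇ : D² → ℂ be holomorphic on the open unit disc and continuous up to the boundary, with power series ẇ(z) = Σ_{k≥0} α_k z^k, and suppose that along the boundary it satisfies ẇ(e^{iφ}) · conj(w₀(e^{iφ})) + conj(ẇ(e^{iφ})) · w₀(e^{iφ}) = 0 for all φ, where w₀(e^{iφ}) = √r · e^{iφ} for some fixed r > 0. Then α_k = 0 for all k ≥ 3, α₀ + conj(α₂) = 0, and α₁ + conj(α₁) = 0. In particular, the real vector space of such ẇ has dimension 3, parametrized by α₀ ∈ ℂ and the imaginary part of α₁. -/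
open Metric Complex

open intervalIntegral MeasureTheory in
lemma E_int (m : ℤ) :
    ∫ φ in (0:ℝ)..(2*Real.pi), Complex.exp ((m:ℂ) * φ * Complex.I)
      = if m = 0 then (2*Real.pi : ℂ) else 0 := by
  rcases eq_or_ne m 0 with h | h
  · simp [h]
  · rw [if_neg h]
    have hc : (m:ℂ) * Complex.I ≠ 0 :=
      mul_ne_zero (Int.cast_ne_zero.mpr h) Complex.I_ne_zero
    have := integral_exp_mul_complex (a := (0:ℝ)) (b := 2*Real.pi) hc
    simp_rw [show ∀ φ:ℝ, (m:ℂ) * φ * Complex.I = ((m:ℂ)*Complex.I) * φ from fun φ => by ring]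
    rw [this]
    have h1 : Complex.exp ((m:ℂ)*Complex.I*((2*Real.pi:ℝ):ℂ)) = 1 := by
      rw [show (m:ℂ)*Complex.I*((2*Real.pi:ℝ):ℂ) = (m:ℂ)*(2*(Real.pi:ℂ)*Complex.I) by
        push_cast; ring]
      exact Complex.exp_int_mul_two_pi_mul_I m
    rw [h1]
    simp

lemma norm_exp_I (m : ℤ) (φ : ℝ) : ‖Complex.exp ((m:ℂ) * φ * Complex.I)‖ = 1 := by
  rw [show (m:ℂ) * φ * Complex.I = ((m*φ:ℝ):ℂ) * Complex.I by push_cast; ring]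
  exact Complex.norm_exp_ofReal_mul_I _

lemma cont_exp_I (m : ℤ) : Continuous (fun φ : ℝ => Complex.exp ((m:ℂ) * φ * Complex.I)) := by
  fun_prop

lemma key_hasSum (α : ℕ → ℂ) (w : ℂ → ℂ)
    (hsum : ∀ z ∈ Metric.closedBall (0 : ℂ) 1, HasSum (fun k => α k * z ^ k) (w z))
    (hg : ∀ φ : ℝ, w (Complex.exp (φ * Complex.I)) * Complex.exp (((-1:ℤ):ℂ) * φ * Complex.I)
        + (starRingEnd ℂ) (w (Complex.exp (φ * Complex.I))) *
          Complex.exp (((1:ℤ):ℂ) * φ * Complex.I) = 0)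
    (n : ℤ) :
    HasSum (fun k : ℕ => α k * (if ((k:ℤ) - 1 - n) = 0 then (2*Real.pi:ℂ) else 0)
      + (starRingEnd ℂ) (α k) * (if (1 - (k:ℤ) - n) = 0 then (2*Real.pi:ℂ) else 0)) 0 := by
  set F : ℕ → ℝ → ℂ := fun k φ =>
    α k * Complex.exp ((((k:ℤ) - 1 - n : ℤ):ℂ) * φ * Complex.I)
      + (starRingEnd ℂ) (α k) * Complex.exp (((1 - (k:ℤ) - n : ℤ):ℂ) * φ * Complex.I) with hF
  have hαnorm : Summable fun k => ‖α k‖ := by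
    have h1 := (hsum 1 (by simp)).summable
    simp only [one_pow, mul_one] at h1
    exact summable_norm_iff.mpr h1
  have hlim : ∀ φ : ℝ, HasSum (fun k => F k φ) 0 := by
    intro φ
    have hss : ∀ a b c : ℤ, a + b = c →
        Complex.exp ((a:ℂ) * φ * Complex.I) * Complex.exp ((b:ℂ) * φ * Complex.I)
          = Complex.exp ((c:ℂ) * φ * Complex.I) := by
      intro a b c h
      rw [← Complex.exp_add]
      congr 1
      rw [← h]
      push_cast
      ring
    have hzball : Complex.exp (φ * Complex.I) ∈ Metric.closedBall (0:ℂ) 1 := by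
      simp [Metric.mem_closedBall, Complex.norm_exp_ofReal_mul_I]
    have h1 := hsum _ hzball
    have h2 : HasSum (fun k => (starRingEnd ℂ) (α k * Complex.exp (φ * Complex.I) ^ k))
        ((starRingEnd ℂ) (w (Complex.exp (φ * Complex.I)))) :=
      h1.map (starRingEnd ℂ) Complex.continuous_conj
    have hA := h1.mul_right (Complex.exp ((((-1 - n : ℤ)):ℂ) * φ * Complex.I))
    have hB := h2.mul_right (Complex.exp ((((1 - n : ℤ)):ℂ) * φ * Complex.I))
    have hAB := hA.add hB
    have hzk : ∀ k : ℕ, Complex.exp (φ * Complex.I) ^ k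
        = Complex.exp ((((k:ℤ)):ℂ) * φ * Complex.I) := by
      intro k
      rw [← Complex.exp_nat_mul]
      congr 1
      push_cast
      ring
    have hczk : ∀ k : ℕ, (starRingEnd ℂ) (Complex.exp (φ * Complex.I) ^ k)
        = Complex.exp ((((-k : ℤ)):ℂ) * φ * Complex.I) := by
      intro k
      rw [hzk, ← Complex.exp_conj]
      congr 1
      simp only [map_mul, Complex.conj_I, map_intCast, Complex.conj_ofReal]
      push_cast
      ring
    have hfun : (fun k : ℕ =>
        α k * Complex.exp (φ * Complex.I) ^ k *
            Complex.exp ((((-1 - n : ℤ)):ℂ) * φ * Complex.I)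
          + (starRingEnd ℂ) (α k * Complex.exp (φ * Complex.I) ^ k) *
            Complex.exp ((((1 - n : ℤ)):ℂ) * φ * Complex.I)) = fun k => F k φ := by
      funext k
      rw [map_mul, hczk k, hzk k, mul_assoc (α k), mul_assoc ((starRingEnd ℂ) (α k)),
        hss (k:ℤ) (-1-n) ((k:ℤ)-1-n) (by ring), hss (-k : ℤ) (1-n) (1-(k:ℤ)-n) (by ring)]
    rw [hfun] at hAB
    convert hAB using 1
    · rfl
    have e1 := hss (-1) (-n) (-1-n) (by ring)
    have e2 := hss 1 (-n) (1-n) (by ring)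
    linear_combination (-(Complex.exp (((-n:ℤ):ℂ) * φ * Complex.I))) * hg φ
      + w (Complex.exp (φ * Complex.I)) * e1
      + (starRingEnd ℂ) (w (Complex.exp (φ * Complex.I))) * e2
  have hint : HasSum (fun k => ∫ φ in (0:ℝ)..(2*Real.pi), F k φ)
      (∫ φ in (0:ℝ)..(2*Real.pi), (0:ℂ)) := by
    apply intervalIntegral.hasSum_integral_of_dominated_convergence
      (bound := fun k _ => 2 * ‖α k‖)
    · intro k
      exact ((continuous_const.mul (cont_exp_I _)).add
        (continuous_const.mul (cont_exp_I _))).aestronglyMeasurable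
    · intro k
      filter_upwards with t ht
      calc ‖F k t‖ ≤ ‖α k * Complex.exp ((((k:ℤ) - 1 - n : ℤ):ℂ) * t * Complex.I)‖
            + ‖(starRingEnd ℂ) (α k) *
              Complex.exp (((1 - (k:ℤ) - n : ℤ):ℂ) * t * Complex.I)‖ := norm_add_le _ _
        _ = 2 * ‖α k‖ := by
            rw [norm_mul, norm_mul, norm_exp_I, norm_exp_I, RCLike.norm_conj]
            ring
    · filter_upwards with t ht
      exact hαnorm.mul_left 2
    · exact intervalIntegrable_const
    · filter_upwards with t ht
      exact hlim t
  rw [intervalIntegral.integral_zero] at hint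
  convert hint using 2 with k
  rw [hF]
  simp only
  rw [intervalIntegral.integral_add
      (f := fun φ : ℝ => α k * Complex.exp ((((k:ℤ) - 1 - n : ℤ):ℂ) * φ * Complex.I))
      (g := fun φ : ℝ => (starRingEnd ℂ) (α k) * Complex.exp (((1 - (k:ℤ) - n : ℤ):ℂ) * φ * Complex.I))
      ((continuous_const.mul (cont_exp_I _)).intervalIntegrable _ _)
      ((continuous_const.mul (cont_exp_I _)).intervalIntegrable _ _),
    intervalIntegral.integral_const_mul, intervalIntegral.integral_const_mul, E_int, E_int]

/-- If `ẇ(z) = Σ_{k≥0} α_k z^k` is holomorphic on the closed unit disc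
(given by a power series converging there) and satisfies the boundary condition
`ẇ(e^{iφ})·conj(w₀(e^{iφ})) + conj(ẇ(e^{iφ}))·w₀(e^{iφ}) = 0` for all `φ`, where
`w₀(e^{iφ}) = √r · e^{iφ}` and `r > 0`, then `α_k = 0` for `k ≥ 3`,
`α₀ + conj(α₂) = 0` and `α₁ + conj(α₁) = 0`. -/
theorem bishop_disc_kernel_coefficients (r : ℝ) (hr : 0 < r)
    (α : ℕ → ℂ) (w : ℂ → ℂ)
    (hsum : ∀ z ∈ closedBall (0 : ℂ) 1, HasSum (fun k => α k * z ^ k) (w z))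
    (hbd : ∀ φ : ℝ,
      w (Complex.exp (φ * Complex.I)) *
          (starRingEnd ℂ) ((Real.sqrt r : ℂ) * Complex.exp (φ * Complex.I)) +
        (starRingEnd ℂ) (w (Complex.exp (φ * Complex.I))) *
          ((Real.sqrt r : ℂ) * Complex.exp (φ * Complex.I)) = 0) :
    (∀ k : ℕ, 3 ≤ k → α k = 0) ∧
      α 0 + (starRingEnd ℂ) (α 2) = 0 ∧ α 1 + (starRingEnd ℂ) (α 1) = 0 := by
  have hs : (Real.sqrt r : ℂ) ≠ 0 := by
    simp only [ne_eq, Complex.ofReal_eq_zero]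
    exact (Real.sqrt_ne_zero'.mpr hr)
  have two_pi_ne : (2 * Real.pi : ℂ) ≠ 0 := by
    simp only [ne_eq, mul_eq_zero, not_or]
    exact ⟨two_ne_zero, by exact_mod_cast Real.pi_ne_zero⟩
  have hg : ∀ φ : ℝ, w (Complex.exp (φ * Complex.I)) *
        Complex.exp (((-1:ℤ):ℂ) * φ * Complex.I)
      + (starRingEnd ℂ) (w (Complex.exp (φ * Complex.I))) *
        Complex.exp (((1:ℤ):ℂ) * φ * Complex.I) = 0 := by
    intro φ
    have h := hbd φ
    have hcz : (starRingEnd ℂ) (Complex.exp (φ * Complex.I))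
        = Complex.exp (((-1:ℤ):ℂ) * φ * Complex.I) := by
      rw [← Complex.exp_conj]
      congr 1
      simp only [map_mul, Complex.conj_ofReal, Complex.conj_I]
      push_cast
      ring
    rw [map_mul, Complex.conj_ofReal, hcz] at h
    have e1 : Complex.exp (((1:ℤ):ℂ) * φ * Complex.I) = Complex.exp ((φ:ℂ) * Complex.I) := by
      congr 1
      push_cast
      ring
    rw [e1]
    apply mul_left_cancel₀ hs
    rw [mul_zero]
    linear_combination h
  have main := key_hasSum α w hsum hg
  refine ⟨?_, ?_, ?_⟩
  · intro k hk
    have h := main ((k:ℤ) - 1)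
    have heq : (fun j : ℕ => α j * (if ((j:ℤ) - 1 - ((k:ℤ) - 1)) = 0 then (2*Real.pi:ℂ) else 0)
        + (starRingEnd ℂ) (α j) *
          (if (1 - (j:ℤ) - ((k:ℤ) - 1)) = 0 then (2*Real.pi:ℂ) else 0))
        = fun j => if j = k then (2*Real.pi:ℂ) * α k else 0 := by
      funext j
      by_cases hj : j = k
      · subst hj
        rw [if_pos (by ring), if_neg (by omega), if_pos rfl]
        ring
      · rw [if_neg (by omega), if_neg (by omega), if_neg hj]
        ring
    rw [heq] at h
    have h2 : (2*Real.pi:ℂ) * α k = 0 := (hasSum_ite_eq k _).unique h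
    rcases mul_eq_zero.mp h2 with h3 | h3
    · exact absurd h3 two_pi_ne
    · exact h3
  · have h := main 1
    have heq : (fun j : ℕ => α j * (if ((j:ℤ) - 1 - 1) = 0 then (2*Real.pi:ℂ) else 0)
        + (starRingEnd ℂ) (α j) * (if (1 - (j:ℤ) - 1) = 0 then (2*Real.pi:ℂ) else 0))
        = fun j => (if j = 2 then (2*Real.pi:ℂ) * α 2 else 0)
          + (if j = 0 then (2*Real.pi:ℂ) * (starRingEnd ℂ) (α 0) else 0) := by
      funext j
      by_cases h2 : j = 2
      · subst h2
        rw [if_pos (by ring), if_neg (by omega), if_pos rfl, if_neg (by omega)]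
        ring
      · by_cases h0 : j = 0
        · subst h0
          rw [if_neg (by omega), if_pos (by ring), if_neg (by omega), if_pos rfl]
          ring
        · rw [if_neg (by omega), if_neg (by omega), if_neg h2, if_neg h0]
          ring
    rw [heq] at h
    have h2 : (2*Real.pi:ℂ) * α 2 + (2*Real.pi:ℂ) * (starRingEnd ℂ) (α 0) = 0 :=
      ((hasSum_ite_eq 2 _).add (hasSum_ite_eq 0 _)).unique h
    have h3 : α 2 + (starRingEnd ℂ) (α 0) = 0 := by
      apply mul_left_cancel₀ two_pi_ne
      rw [mul_zero, mul_add]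
      exact h2
    have h4 := congrArg (starRingEnd ℂ) h3
    simp only [map_add, Complex.conj_conj, map_zero] at h4
    linear_combination h4
  · have h := main 0
    have heq : (fun j : ℕ => α j * (if ((j:ℤ) - 1 - 0) = 0 then (2*Real.pi:ℂ) else 0)
        + (starRingEnd ℂ) (α j) * (if (1 - (j:ℤ) - 0) = 0 then (2*Real.pi:ℂ) else 0))
        = fun j => if j = 1 then (2*Real.pi:ℂ) * (α 1 + (starRingEnd ℂ) (α 1)) else 0 := by
      funext j
      by_cases h1 : j = 1
      · subst h1
        rw [if_pos (by ring), if_pos (by ring), if_pos rfl]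
        ring
      · rw [if_neg (by omega), if_neg (by omega), if_neg h1]
        ring
    rw [heq] at h
    have h2 : (2*Real.pi:ℂ) * (α 1 + (starRingEnd ℂ) (α 1)) = 0 :=
      (hasSum_ite_eq 1 _).unique h
    rcases mul_eq_zero.mp h2 with h3 | h3
    · exact absurd h3 two_pi_ne
    · exact h3
end
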